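/- Any rank-4 spinor X_{ABCD} on a 4-dimensional symplectic space satisfying X_{ABCD} = X_{(AB)CD} = X_{AB(CD)} = X_{CDAB} decomposes as X_{ABCD} = Λ(ε_{AD}ε_{BC} + ε_{AC}ε_{BD}) + (1/6)(ε_{BD}Σ_{AC} + ε_{BC}Σ_{AD} + ε_{AD}Σ_{BC} + ε_{AC}Σ_{BD}) + Ψ_{ABCD} + Ω_{ACBD} + Ω_{ADBC}, where Λ = X^{AB}{}_{AB}/20, Σ_{AB} is antisymmetric and traceless, Ψ_{ABCD} is totally symmetric and traceless, and Ω_{ABCD} is totally traceless with Riemann symmetries (Ω_{ABCD}=Ω_{[AB]CD}=Ω_{CDAB}, cyclic identity Ω_{ABCD}+Ω_{BCAD}+Ω_{CABD}=0). -/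

import Mathlib

open Finset Matrix

namespace Stmt15

lemma swap_sum (f : Fin 4 → Fin 4 → ℂ) :
    ∑ a : Fin 4, ∑ b : Fin 4, f a b = ∑ a : Fin 4, ∑ b : Fin 4, f b a :=
  Finset.sum_comm

lemma sum4_reorder (f : Fin 4 → Fin 4 → Fin 4 → Fin 4 → ℂ) :
    ∑ a : Fin 4, ∑ b : Fin 4, ∑ e : Fin 4, ∑ g : Fin 4, f a b e g
      = ∑ b : Fin 4, ∑ g : Fin 4, ∑ a : Fin 4, ∑ e : Fin 4, f a b e g := by
  rw [Finset.sum_comm]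
  refine Finset.sum_congr rfl fun b _ => ?_
  calc ∑ a : Fin 4, ∑ e : Fin 4, ∑ g : Fin 4, f a b e g
      = ∑ a : Fin 4, ∑ g : Fin 4, ∑ e : Fin 4, f a b e g :=
        Finset.sum_congr rfl fun a _ => Finset.sum_comm
    _ = ∑ g : Fin 4, ∑ a : Fin 4, ∑ e : Fin 4, f a b e g := Finset.sum_comm

section Main
variable (ε εh : Fin 4 → Fin 4 → ℂ) (X : Fin 4 → Fin 4 → Fin 4 → Fin 4 → ℂ)

noncomputable def GG : Fin 4 → Fin 4 → ℂ :=
  fun B D => ∑ A : Fin 4, ∑ C : Fin 4, εh A C * X A B C D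

noncomputable def trX : ℂ := ∑ B : Fin 4, ∑ F : Fin 4, εh B F * GG εh X B F

noncomputable def SgF : Fin 4 → Fin 4 → ℂ :=
  fun A C => GG εh X A C - (trX εh X / 4) * ε A C

noncomputable def PsiF : Fin 4 → Fin 4 → Fin 4 → Fin 4 → ℂ :=
  fun A B C D => (1/3 : ℂ) * (X A B C D + X A C B D + X A D B C)

noncomputable def OmF : Fin 4 → Fin 4 → Fin 4 → Fin 4 → ℂ :=
  fun A B C D =>
    (1/3 : ℂ) * (X A C B D - X A D B C)
    - (trX εh X / 60) * (2 * (ε A B * ε C D) + ε A C * ε B D - ε A D * ε B C)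
    - (1/9 : ℂ) * (ε A B * SgF ε εh X C D + ε C D * SgF ε εh X A B)
    - (1/18 : ℂ) * (ε A C * SgF ε εh X B D - ε A D * SgF ε εh X B C
        - ε B C * SgF ε εh X A D + ε B D * SgF ε εh X A C)

variable (hεa : ∀ A B : Fin 4, ε A B = -ε B A)
  (hεinv : ∀ A C : Fin 4, ∑ B : Fin 4, ε A B * εh C B = if A = C then (1:ℂ) else 0)
  (hsym12 : ∀ A B C D : Fin 4, X A B C D = X B A C D)
  (hsym34 : ∀ A B C D : Fin 4, X A B C D = X A B D C)
  (hpair : ∀ A B C D : Fin 4, X A B C D = X C D A B)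

include hεa hεinv in
lemma matrix_facts :
    (∀ b d : Fin 4, ∑ a : Fin 4, εh a b * ε a d = if b = d then (1:ℂ) else 0) ∧
    (∀ a d : Fin 4, ∑ c : Fin 4, εh a c * ε c d = if a = d then (-1:ℂ) else 0) ∧
    (∀ a b : Fin 4, εh a b = -εh b a) := by
  have h1 : (Matrix.of ε) * (Matrix.of εh)ᵀ = 1 := by
    ext a c
    simpa [Matrix.mul_apply, Matrix.one_apply] using hεinv a c
  have h2 : (Matrix.of εh)ᵀ * (Matrix.of ε) = 1 := mul_eq_one_comm.mp h1
  have hMT : (Matrix.of ε)ᵀ = -(Matrix.of ε) := by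
    ext a b
    simpa using hεa b a
  have h3 : (Matrix.of εh) * (Matrix.of ε) = -1 := by
    have := congrArg Matrix.transpose h1
    rw [Matrix.transpose_mul, Matrix.transpose_transpose, hMT, Matrix.transpose_one] at this
    calc (Matrix.of εh) * (Matrix.of ε) = -((Matrix.of εh) * -(Matrix.of ε)) := by
          rw [Matrix.mul_neg, neg_neg]
      _ = -1 := by rw [this]
  have hN : (Matrix.of εh) = -(Matrix.of εh)ᵀ := by
    calc (Matrix.of εh) = (Matrix.of εh) * ((Matrix.of ε) * (Matrix.of εh)ᵀ) := by
          rw [h1, Matrix.mul_one]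
      _ = ((Matrix.of εh) * (Matrix.of ε)) * (Matrix.of εh)ᵀ := by rw [Matrix.mul_assoc]
      _ = -(Matrix.of εh)ᵀ := by rw [h3]; simp
  refine ⟨fun b d => ?_, fun a d => ?_, fun a b => ?_⟩
  · have := congrFun (congrFun h2 b) d
    simpa [Matrix.mul_apply, Matrix.one_apply] using this
  · have := congrFun (congrFun h3 a) d
    simp only [Matrix.mul_apply, Matrix.neg_apply, Matrix.one_apply] at this
    simpa [apply_ite] using this
  · have := congrFun (congrFun hN a) b
    simpa using this

-- contraction lemmas: take the derived facts directly as hypotheses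
lemma CL1 (hI2 : ∀ b d : Fin 4, ∑ a : Fin 4, εh a b * ε a d = if b = d then (1:ℂ) else 0)
    (b : Fin 4) (h : Fin 4 → ℂ) :
    ∑ A : Fin 4, ∑ C : Fin 4, εh A C * (ε A b * h C) = h b := by
  rw [swap_sum]
  have e : ∀ A : Fin 4, ∑ C : Fin 4, εh C A * (ε C b * h A)
      = (if A = b then (1:ℂ) else 0) * h A := by
    intro A
    rw [← hI2 A b, Finset.sum_mul]
    exact Finset.sum_congr rfl fun C _ => by ring
  rw [Finset.sum_congr rfl fun A (_ : A ∈ univ) => e A]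
  simp

lemma CL2 (hI4 : ∀ a d : Fin 4, ∑ c : Fin 4, εh a c * ε c d = if a = d then (-1:ℂ) else 0)
    (d : Fin 4) (h : Fin 4 → ℂ) :
    ∑ A : Fin 4, ∑ C : Fin 4, εh A C * (ε C d * h A) = -h d := by
  have e : ∀ A : Fin 4, ∑ C : Fin 4, εh A C * (ε C d * h A)
      = (if A = d then (-1:ℂ) else 0) * h A := by
    intro A
    rw [← hI4 A d, Finset.sum_mul]
    exact Finset.sum_congr rfl fun C _ => by ring
  rw [Finset.sum_congr rfl fun A (_ : A ∈ univ) => e A]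
  simp

include hεinv in
lemma CL3 (b : Fin 4) (h : Fin 4 → ℂ) :
    ∑ A : Fin 4, ∑ C : Fin 4, εh A C * (ε b C * h A) = h b := by
  have e : ∀ A : Fin 4, ∑ C : Fin 4, εh A C * (ε b C * h A)
      = (if b = A then (1:ℂ) else 0) * h A := by
    intro A
    rw [← hεinv b A, Finset.sum_mul]
    exact Finset.sum_congr rfl fun C _ => by ring
  rw [Finset.sum_congr rfl fun A (_ : A ∈ univ) => e A]
  simp

lemma C2 (hI2 : ∀ b d : Fin 4, ∑ a : Fin 4, εh a b * ε a d = if b = d then (1:ℂ) else 0) :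
    ∑ A : Fin 4, ∑ C : Fin 4, εh A C * ε A C = 4 := by
  rw [swap_sum]
  rw [Finset.sum_congr rfl fun A (_ : A ∈ univ) => hI2 A A]
  simp

include hsym12 in
lemma t13X2 (hεh : ∀ a b : Fin 4, εh a b = -εh b a) (B D : Fin 4) :
    ∑ A : Fin 4, ∑ C : Fin 4, εh A C * X A C B D = 0 := by
  have h := swap_sum (fun A C => εh A C * X A C B D)
  have h2 : ∀ A C : Fin 4, εh C A * X C A B D = -(εh A C * X A C B D) := by
    intro A C; rw [hεh C A, hsym12 C A B D]; ring
  rw [Finset.sum_congr rfl fun A (_ : A ∈ univ) => Finset.sum_congr rfl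
    fun C (_ : C ∈ univ) => h2 A C] at h
  simp only [Finset.sum_neg_distrib] at h
  linear_combination (1/2 : ℂ) * h

include hsym12 hpair in
lemma t13X3 (hεh : ∀ a b : Fin 4, εh a b = -εh b a) (B D : Fin 4) :
    ∑ A : Fin 4, ∑ C : Fin 4, εh A C * X A D B C = -GG εh X B D := by
  have h := swap_sum (fun A C => εh A C * X A D B C)
  have h2 : ∀ A C : Fin 4, εh C A * X C D B A = -(εh A C * X A B C D) := by
    intro A C; rw [hεh C A, hpair C D B A, hsym12 B A C D]; ring
  rw [Finset.sum_congr rfl fun A (_ : A ∈ univ) => Finset.sum_congr rfl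
    fun C (_ : C ∈ univ) => h2 A C] at h
  simp only [Finset.sum_neg_distrib] at h
  rw [h]; rfl

include hpair in
lemma hGa (hεh : ∀ a b : Fin 4, εh a b = -εh b a) (B D : Fin 4) :
    GG εh X D B = -GG εh X B D := by
  have h2 : ∀ A C : Fin 4, εh C A * X C D A B = -(εh A C * X A B C D) := by
    intro A C; rw [hεh C A, hpair C D A B]; ring
  have h := swap_sum (fun A C => εh A C * X A D C B)
  rw [Finset.sum_congr rfl fun A (_ : A ∈ univ) => Finset.sum_congr rfl
    fun C (_ : C ∈ univ) => h2 A C] at h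
  simp only [Finset.sum_neg_distrib] at h
  rw [show GG εh X D B = ∑ A : Fin 4, ∑ C : Fin 4, εh A C * X A D C B from rfl, h]
  rfl

include hpair in
lemma htr :
    (∑ A : Fin 4, ∑ B : Fin 4, ∑ E : Fin 4, ∑ F : Fin 4, εh A E * εh B F * X E F A B)
      = trX εh X := by
  calc (∑ A : Fin 4, ∑ B : Fin 4, ∑ E : Fin 4, ∑ F : Fin 4, εh A E * εh B F * X E F A B)
      = ∑ A : Fin 4, ∑ B : Fin 4, ∑ E : Fin 4, ∑ F : Fin 4, εh A E * εh B F * X A B E F := by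
        refine Finset.sum_congr rfl fun A _ => Finset.sum_congr rfl fun B _ =>
          Finset.sum_congr rfl fun E _ => Finset.sum_congr rfl fun F _ => by rw [hpair A B E F]
    _ = ∑ B : Fin 4, ∑ F : Fin 4, ∑ A : Fin 4, ∑ E : Fin 4, εh A E * εh B F * X A B E F :=
        sum4_reorder _
    _ = trX εh X := by
        refine Finset.sum_congr rfl fun B _ => Finset.sum_congr rfl fun F _ => ?_
        rw [show GG εh X B F = ∑ A : Fin 4, ∑ E : Fin 4, εh A E * X A B E F from rfl,
          Finset.mul_sum]
        refine Finset.sum_congr rfl fun A _ => ?_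
        rw [Finset.mul_sum]
        exact Finset.sum_congr rfl fun E _ => by ring

include hεa hpair in
lemma hSga (hεh : ∀ a b : Fin 4, εh a b = -εh b a) (a b : Fin 4) :
    SgF ε εh X a b = -SgF ε εh X b a := by
  simp only [SgF]
  rw [hGa εh X hpair hεh b a]
  linear_combination (- (trX εh X / 4)) * hεa a b

lemma hSgtr (hI2 : ∀ b d : Fin 4, ∑ a : Fin 4, εh a b * ε a d = if b = d then (1:ℂ) else 0) :
    ∑ A : Fin 4, ∑ B : Fin 4, εh A B * SgF ε εh X A B = 0 := by
  have e : ∀ A B : Fin 4, εh A B * SgF ε εh X A B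
      = εh A B * GG εh X A B + (-(trX εh X / 4)) * (εh A B * ε A B) := by
    intro A B; simp only [SgF]; ring
  rw [Finset.sum_congr rfl fun A (_ : A ∈ univ) => Finset.sum_congr rfl
    fun B (_ : B ∈ univ) => e A B]
  simp only [Finset.sum_add_distrib, ← Finset.mul_sum]
  rw [C2 ε εh hI2]
  rw [show (∑ A : Fin 4, ∑ B : Fin 4, εh A B * GG εh X A B) = trX εh X from rfl]
  ring

include hεa hεinv hsym12 hpair in
lemma psitrace (hεh : ∀ a b : Fin 4, εh a b = -εh b a) (B D : Fin 4) :
    ∑ A : Fin 4, ∑ C : Fin 4, εh A C * PsiF X A B C D = 0 := by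
  have e : ∀ A C : Fin 4, εh A C * PsiF X A B C D
      = (1/3 : ℂ) * (εh A C * X A B C D)
      + (1/3 : ℂ) * (εh A C * X A C B D)
      + (1/3 : ℂ) * (εh A C * X A D B C) := by
    intro A C; simp only [PsiF]; ring
  rw [Finset.sum_congr rfl fun A (_ : A ∈ univ) => Finset.sum_congr rfl
    fun C (_ : C ∈ univ) => e A C]
  simp only [Finset.sum_add_distrib, ← Finset.mul_sum]
  rw [t13X2 εh X hsym12 hεh B D, t13X3 εh X hsym12 hpair hεh B D]
  rw [show (∑ A : Fin 4, ∑ C : Fin 4, εh A C * X A B C D) = GG εh X B D from rfl]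
  ring

include hεa hεinv hsym12 hpair in
lemma t13 (hεh : ∀ a b : Fin 4, εh a b = -εh b a)
    (hI2 : ∀ b d : Fin 4, ∑ a : Fin 4, εh a b * ε a d = if b = d then (1:ℂ) else 0)
    (hI4 : ∀ a d : Fin 4, ∑ c : Fin 4, εh a c * ε c d = if a = d then (-1:ℂ) else 0)
    (B D : Fin 4) :
    ∑ A : Fin 4, ∑ C : Fin 4, εh A C * OmF ε εh X A B C D = 0 := by
  have e : ∀ A C : Fin 4, εh A C * OmF ε εh X A B C D
      = (1/3 : ℂ) * (εh A C * X A C B D)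
      + (-1/3 : ℂ) * (εh A C * X A D B C)
      + (-(trX εh X / 30)) * (εh A C * (ε A B * ε C D))
      + (-(trX εh X / 60) * ε B D) * (εh A C * ε A C)
      + (trX εh X / 60) * (εh A C * (ε A D * ε B C))
      + (-1/9 : ℂ) * (εh A C * (ε A B * SgF ε εh X C D))
      + (-1/9 : ℂ) * (εh A C * (ε C D * SgF ε εh X A B))
      + (-(1/18 : ℂ) * SgF ε εh X B D) * (εh A C * ε A C)
      + (1/18 : ℂ) * (εh A C * (ε A D * SgF ε εh X B C))
      + (1/18 : ℂ) * (εh A C * (ε B C * SgF ε εh X A D))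
      + (-(1/18 : ℂ) * ε B D) * (εh A C * SgF ε εh X A C) := by
    intro A C; simp only [OmF]; ring
  rw [Finset.sum_congr rfl fun A (_ : A ∈ univ) => Finset.sum_congr rfl
    fun C (_ : C ∈ univ) => e A C]
  simp only [Finset.sum_add_distrib, ← Finset.mul_sum]
  rw [t13X2 εh X hsym12 hεh B D, t13X3 εh X hsym12 hpair hεh B D,
    CL1 ε εh hI2 B (fun c => ε c D), CL1 ε εh hI2 D (fun c => ε B c),
    CL1 ε εh hI2 B (fun c => SgF ε εh X c D), CL2 ε εh hI4 D (fun a => SgF ε εh X a B),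
    CL1 ε εh hI2 D (fun c => SgF ε εh X B c), CL3 ε εh hεinv B (fun a => SgF ε εh X a D),
    C2 ε εh hI2, hSgtr ε εh X hI2]
  simp only [SgF]
  linear_combination (1/9 : ℂ) * hGa εh X hpair hεh D B + (-(trX εh X)/36) * hεa D B

end Main

end Stmt15

/-- Irreducible decomposition of a rank-4 spinor `X_{ABCD}`
with the symmetries `X_{(AB)CD} = X_{AB(CD)} = X_{ABCD} = X_{CDAB}` into
scalar, traceless antisymmetric, totally symmetric, and Riemann-symmetric
traceless pieces. -/
theorem stmt_15
    (ε εh : Fin 4 → Fin 4 → ℂ)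
    (X : Fin 4 → Fin 4 → Fin 4 → Fin 4 → ℂ)
    (hεa : ∀ A B : Fin 4, ε A B = -ε B A)
    (hεinv : ∀ A C : Fin 4,
      ∑ B : Fin 4, ε A B * εh C B = if A = C then (1 : ℂ) else 0)
    (hsym12 : ∀ A B C D : Fin 4, X A B C D = X B A C D)
    (hsym34 : ∀ A B C D : Fin 4, X A B C D = X A B D C)
    (hpair : ∀ A B C D : Fin 4, X A B C D = X C D A B) :
    ∃ (Λ : ℂ) (Sg : Fin 4 → Fin 4 → ℂ)
      (Ψ Ω : Fin 4 → Fin 4 → Fin 4 → Fin 4 → ℂ),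
      (Λ = (1/20 : ℂ) * ∑ A : Fin 4, ∑ B : Fin 4, ∑ E : Fin 4, ∑ F : Fin 4,
        εh A E * εh B F * X E F A B) ∧
      (∀ A B : Fin 4, Sg A B = -Sg B A) ∧
      (∑ A : Fin 4, ∑ B : Fin 4, εh A B * Sg A B = 0) ∧
      (∀ A B C D : Fin 4, Ψ A B C D = Ψ B A C D) ∧
      (∀ A B C D : Fin 4, Ψ A B C D = Ψ A C B D) ∧
      (∀ A B C D : Fin 4, Ψ A B C D = Ψ A B D C) ∧
      (∀ B D : Fin 4, ∑ A : Fin 4, ∑ C : Fin 4, εh A C * Ψ A B C D = 0) ∧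
      (∀ A B C D : Fin 4, Ω A B C D = -Ω B A C D) ∧
      (∀ A B C D : Fin 4, Ω A B C D = Ω C D A B) ∧
      (∀ A B C D : Fin 4, Ω A B C D + Ω B C A D + Ω C A B D = 0) ∧
      (∀ B D : Fin 4, ∑ A : Fin 4, ∑ C : Fin 4, εh A C * Ω A B C D = 0) ∧
      (∀ B C : Fin 4, ∑ A : Fin 4, ∑ D : Fin 4, εh A D * Ω A B C D = 0) ∧
      (∀ A D : Fin 4, ∑ B : Fin 4, ∑ C : Fin 4, εh B C * Ω A B C D = 0) ∧
      (∀ A C : Fin 4, ∑ B : Fin 4, ∑ D : Fin 4, εh B D * Ω A B C D = 0) ∧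
      (∀ A B C D : Fin 4,
        X A B C D
          = Λ * (ε A D * ε B C + ε A C * ε B D)
            + (1/6 : ℂ) * (ε B D * Sg A C + ε B C * Sg A D
                + ε A D * Sg B C + ε A C * Sg B D)
            + Ψ A B C D + Ω A C B D + Ω A D B C) := by
  open Stmt15 in
  obtain ⟨hI2, hI4, hεh⟩ := Stmt15.matrix_facts ε εh hεa hεinv
  have hSga' := Stmt15.hSga ε εh X hεa hpair hεh
  have hGa' := Stmt15.hGa εh X hpair hεh
  have htr' := Stmt15.htr εh X hpair
  have ht13 := Stmt15.t13 ε εh X hεa hεinv hsym12 hpair hεh hI2 hI4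
  have hOa : ∀ A B C D : Fin 4,
      Stmt15.OmF ε εh X A B C D = -Stmt15.OmF ε εh X B A C D := by
    intro A B C D
    simp only [Stmt15.OmF]
    rw [hεa B A, hSga' B A]
    linear_combination (1/3 : ℂ) * hpair A C B D + (1/3 : ℂ) * hpair B C A D
  have hOp : ∀ A B C D : Fin 4,
      Stmt15.OmF ε εh X A B C D = Stmt15.OmF ε εh X C D A B := by
    intro A B C D
    simp only [Stmt15.OmF]
    rw [hεa C A, hεa C B, hεa D A, hεa D B,
      hSga' C A, hSga' C B, hSga' D A, hSga' D B]
    linear_combination (-1/3 : ℂ) * hsym12 C A D B - (1/3 : ℂ) * hsym34 A C D B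
      + (1/3 : ℂ) * hsym12 C B D A + (1/3 : ℂ) * hsym34 B C D A + (1/3 : ℂ) * hpair B C A D
  have hO34 : ∀ A B C D : Fin 4,
      Stmt15.OmF ε εh X A B C D = -Stmt15.OmF ε εh X A B D C := by
    intro A B C D
    rw [hOp A B C D, hOa C D A B, hOp D C A B]
  have ht14 : ∀ B C : Fin 4,
      ∑ A : Fin 4, ∑ D : Fin 4, εh A D * Stmt15.OmF ε εh X A B C D = 0 := by
    intro B C
    have e : ∀ A D : Fin 4, εh A D * Stmt15.OmF ε εh X A B C D
        = -(εh A D * Stmt15.OmF ε εh X A B D C) := by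
      intro A D; rw [hO34 A B C D]; ring
    rw [Finset.sum_congr rfl fun A (_ : A ∈ Finset.univ) => Finset.sum_congr rfl
      fun D (_ : D ∈ Finset.univ) => e A D]
    simp only [Finset.sum_neg_distrib]
    rw [ht13 B C]
    ring
  have ht23 : ∀ A D : Fin 4,
      ∑ B : Fin 4, ∑ C : Fin 4, εh B C * Stmt15.OmF ε εh X A B C D = 0 := by
    intro A D
    have e1 : ∀ B C : Fin 4, εh B C * Stmt15.OmF ε εh X A B C D
        = εh B C * Stmt15.OmF ε εh X C D A B := by
      intro B C; rw [hOp A B C D]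
    rw [Finset.sum_congr rfl fun B (_ : B ∈ Finset.univ) => Finset.sum_congr rfl
      fun C (_ : C ∈ Finset.univ) => e1 B C]
    have h := Stmt15.swap_sum (fun B C => εh B C * Stmt15.OmF ε εh X C D A B)
    rw [h]
    have e2 : ∀ B C : Fin 4, εh C B * Stmt15.OmF ε εh X B D A C
        = -(εh B C * Stmt15.OmF ε εh X B D A C) := by
      intro B C; rw [hεh C B]; ring
    rw [Finset.sum_congr rfl fun B (_ : B ∈ Finset.univ) => Finset.sum_congr rfl
      fun C (_ : C ∈ Finset.univ) => e2 B C]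
    simp only [Finset.sum_neg_distrib]
    rw [ht14 D A]
    ring
  have ht24 : ∀ A C : Fin 4,
      ∑ B : Fin 4, ∑ D : Fin 4, εh B D * Stmt15.OmF ε εh X A B C D = 0 := by
    intro A C
    have e : ∀ B D : Fin 4, εh B D * Stmt15.OmF ε εh X A B C D
        = -(εh B D * Stmt15.OmF ε εh X A B D C) := by
      intro B D; rw [hO34 A B C D]; ring
    rw [Finset.sum_congr rfl fun B (_ : B ∈ Finset.univ) => Finset.sum_congr rfl
      fun D (_ : D ∈ Finset.univ) => e B D]
    simp only [Finset.sum_neg_distrib]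
    rw [ht23 A C]
    ring
  refine ⟨(1/20 : ℂ) * ∑ A : Fin 4, ∑ B : Fin 4, ∑ E : Fin 4, ∑ F : Fin 4,
      εh A E * εh B F * X E F A B,
    Stmt15.SgF ε εh X, Stmt15.PsiF X, Stmt15.OmF ε εh X,
    rfl, hSga', Stmt15.hSgtr ε εh X hI2, ?_, ?_, ?_,
    Stmt15.psitrace ε εh X hεa hεinv hsym12 hpair hεh, ?_, ?_, ?_,
    ht13, ?_, ?_, ?_, ?_⟩
  · -- Ψ sym 12
    intro A B C D
    simp only [Stmt15.PsiF]
    linear_combination (1/3 : ℂ) * hsym12 A B C D + (1/3 : ℂ) * hpair A C B D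
      + (1/3 : ℂ) * hpair A D B C
  · -- Ψ sym 23
    intro A B C D
    simp only [Stmt15.PsiF]
    linear_combination (-1/3 : ℂ) * hsym34 A D C B
  · -- Ψ sym 34
    intro A B C D
    simp only [Stmt15.PsiF]
    linear_combination (1/3 : ℂ) * hsym34 A B C D
  · -- Ω antisym 12
    exact hOa
  · -- Ω pair symmetry
    exact hOp
  · -- Ω cyclic
    intro A B C D
    simp only [Stmt15.OmF]
    rw [hεa B A, hεa C A, hεa C B, hSga' B A, hSga' C A, hSga' C B]
    linear_combination (1/3 : ℂ) * hsym12 B A C D + (1/3 : ℂ) * hpair A B C D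
      - (1/3 : ℂ) * hsym34 B D C A + (1/3 : ℂ) * hpair A C B D
      + (1/3 : ℂ) * hsym12 C B A D + (1/3 : ℂ) * hpair B C A D
  · -- trace 14
    exact ht14
  · -- trace 23
    exact ht23
  · -- trace 24
    exact ht24
  · -- reconstruction
    intro A B C D
    simp only [Stmt15.PsiF, Stmt15.OmF]
    rw [hsym34 A D C B, hsym34 A B D C, hsym34 A C D B,
      hεa C B, hεa D B, hεa D C, hSga' C B, hSga' D B, hSga' D C]
    linear_combination (-1/20 : ℂ) * (ε A D * ε B C + ε A C * ε B D) * htr'
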